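/- arXiv:1408.5169 — 6 statements merged into one kernel-verified Lean document; each statement's English description precedes it below -/
import Mathlib

section
/- If x_1, ..., x_{d^2} are unit vectors in ℂ^d representing d^2 equiangular lines (i.e., |⟨x_j, x_k⟩| is a constant a for all j ≠ k), then a = 1/√(d+1). -/
noncomputable def yv (d : ℕ) (u : EuclideanSpace ℂ (Fin d)) : EuclideanSpace ℂ (Fin d × Fin d) :=
  WithLp.toLp 2 fun pq : Fin d × Fin d => u pq.1 * (starRingEnd ℂ) (u pq.2)

noncomputable def zv (d : ℕ) : EuclideanSpace ℂ (Fin d × Fin d) :=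
  WithLp.toLp 2 fun pq : Fin d × Fin d => if pq.1 = pq.2 then (1 : ℂ) else 0

open Finset in
theorem inner_yv (d : ℕ) (u v : EuclideanSpace ℂ (Fin d)) :
    (inner ℂ (yv d u) (yv d v) : ℂ) = (inner ℂ u v : ℂ) * (starRingEnd ℂ) (inner ℂ u v : ℂ) := by
  simp only [PiLp.inner_apply, RCLike.inner_apply, yv, map_sum, map_mul,
    Fintype.sum_prod_type, Finset.sum_mul_sum, Complex.conj_conj]
  refine Finset.sum_congr rfl fun p _ => Finset.sum_congr rfl fun q _ => ?_
  ring

open Finset in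
theorem inner_yv_zv (d : ℕ) (u : EuclideanSpace ℂ (Fin d)) :
    (inner ℂ (yv d u) (zv d) : ℂ) = (inner ℂ u u : ℂ) := by
  simp only [PiLp.inner_apply, RCLike.inner_apply, yv, zv, Fintype.sum_prod_type]
  rw [Finset.sum_comm]
  simp [Finset.sum_ite_eq, mul_comm]

open Finset in
theorem inner_zv_yv (d : ℕ) (u : EuclideanSpace ℂ (Fin d)) :
    (inner ℂ (zv d) (yv d u) : ℂ) = (inner ℂ u u : ℂ) := by
  simp only [PiLp.inner_apply, RCLike.inner_apply, yv, zv, Fintype.sum_prod_type]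
  simp [apply_ite, Finset.sum_ite_eq, mul_comm]

open Finset in
theorem inner_zv_zv (d : ℕ) : (inner ℂ (zv d) (zv d) : ℂ) = d := by
  simp only [PiLp.inner_apply, RCLike.inner_apply, zv, Fintype.sum_prod_type]
  simp [apply_ite, Finset.sum_ite_eq]

open Finset in
theorem gram_sum {m : ℕ} (g : Fin m → ℂ) (G : Fin m → Fin m → ℂ) (b : ℂ)
    (hdiag : ∀ j, G j j = 1) (hoff : ∀ j k, j ≠ k → G j k = b) :
    ∑ j, ∑ k, (starRingEnd ℂ) (g j) * (g k * G j k)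
      = (1 - b) * ∑ j, (Complex.normSq (g j) : ℂ)
        + b * ((starRingEnd ℂ) (∑ j, g j) * ∑ j, g j) := by
  have key : ∀ j, ∑ k, (starRingEnd ℂ) (g j) * (g k * G j k)
      = (1 - b) * (Complex.normSq (g j) : ℂ) + b * ((starRingEnd ℂ) (g j) * ∑ k, g k) := by
    intro j
    have : ∀ k, (starRingEnd ℂ) (g j) * (g k * G j k)
        = (if j = k then (1 - b) * (Complex.normSq (g j) : ℂ) else 0)
          + b * ((starRingEnd ℂ) (g j) * g k) := by
      intro k
      by_cases h : j = k
      · subst h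
        rw [hdiag, Complex.normSq_eq_conj_mul_self, if_pos rfl]
        ring
      · rw [hoff j k h, if_neg h]
        ring
    simp only [this, Finset.sum_add_distrib, Finset.sum_ite_eq, Finset.mem_univ, if_true,
      ← Finset.mul_sum]
  simp only [key, Finset.sum_add_distrib, ← Finset.mul_sum, map_sum, Finset.sum_mul]

open Finset in
/-- If `x_1, ..., x_{d^2}` are unit vectors in `ℂ^d` representing `d^2` equiangular
lines (pairwise linearly independent, and `‖⟪x j, x k⟫‖ = a` for all `j ≠ k`),
then `a = 1/√(d+1)`. -/
theorem stmt_0 (d : ℕ) (hd : 2 ≤ d) (x : Fin (d ^ 2) → EuclideanSpace ℂ (Fin d))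
    (hunit : ∀ j, ‖x j‖ = 1)
    (hindep : ∀ j k, j ≠ k → LinearIndependent ℂ ![x j, x k])
    (a : ℝ) (ha : 0 ≤ a)
    (hang : ∀ j k, j ≠ k → ‖(inner ℂ (x j) (x k) : ℂ)‖ = a) :
    a = 1 / Real.sqrt (d + 1) := by
  classical
  have hd2 : 1 < d ^ 2 := by
    have := Nat.pow_le_pow_left hd 2
    omega
  haveI : Nonempty (Fin (d ^ 2)) := ⟨⟨0, by omega⟩⟩
  set y : Fin (d ^ 2) → EuclideanSpace ℂ (Fin d × Fin d) := fun j => yv d (x j) with hy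
  have hxx : ∀ j, (inner ℂ (x j) (x j) : ℂ) = 1 := by
    intro j
    rw [@inner_self_eq_norm_sq_to_K ℂ, hunit]
    norm_num
  -- Gram entries of y
  have hyy : ∀ j k, (inner ℂ (y j) (y k) : ℂ) = if j = k then 1 else ((a : ℂ) ^ 2) := by
    intro j k
    rw [hy]
    by_cases h : j = k
    · subst h
      rw [if_pos rfl, inner_yv, hxx, map_one, one_mul]
    · rw [if_neg h, inner_yv, mul_comm, Complex.conj_mul', hang j k h]
  -- a < 1
  have ha1 : a < 1 := by
    set j0 : Fin (d ^ 2) := ⟨0, by omega⟩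
    set k0 : Fin (d ^ 2) := ⟨1, hd2⟩
    have hjk0 : j0 ≠ k0 := by
      simp only [j0, k0, ne_eq, Fin.mk.injEq]
      omega
    have hx0 : x j0 ≠ 0 := by
      intro h
      have := hunit j0
      rw [h, norm_zero] at this
      norm_num at this
    have hk0 : x k0 ≠ 0 := by
      intro h
      have := hunit k0
      rw [h, norm_zero] at this
      norm_num at this
    have hle : a ≤ 1 := by
      have h := norm_inner_le_norm (𝕜 := ℂ) (x j0) (x k0)
      rwa [hunit, hunit, hang _ _ hjk0, mul_one] at h
    rcases lt_or_eq_of_le hle with h | h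
    · exact h
    · exfalso
      have heq : ‖(inner ℂ (x j0) (x k0) : ℂ)‖ = ‖x j0‖ * ‖x k0‖ := by
        rw [hang _ _ hjk0, hunit, hunit, h, one_mul]
      obtain ⟨r, hr, hxy⟩ := (norm_inner_eq_norm_iff hx0 hk0).mp heq
      have hli := linearIndependent_fin2.mp (hindep j0 k0 hjk0)
      refine hli.2 r⁻¹ ?_
      simp only [Matrix.cons_val_one, Matrix.head_cons, Matrix.cons_val_zero]
      rw [hxy, smul_smul, inv_mul_cancel₀ hr, one_smul]
  have h1a : (0 : ℝ) < 1 - a ^ 2 := by nlinarith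
  -- linear independence of y
  have hli : LinearIndependent ℂ y := by
    rw [Fintype.linearIndependent_iff]
    intro g hg
    have h0 : (inner ℂ (∑ j, g j • y j) (∑ k, g k • y k) : ℂ) = 0 := by
      rw [hg, inner_zero_right]
    rw [sum_inner] at h0
    simp only [inner_sum, inner_smul_left, inner_smul_right] at h0
    have h0' : ∑ j, ∑ k, (starRingEnd ℂ) (g j) * (g k * (inner ℂ (y j) (y k) : ℂ)) = 0 := by
      rw [← h0]
      exact Finset.sum_congr rfl fun j _ => Finset.sum_congr rfl fun k _ => by ring
    rw [gram_sum g (fun j k => (inner ℂ (y j) (y k) : ℂ)) ((a : ℂ) ^ 2)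
        (fun j => by simp only [hyy]; simp) (fun j k h => by simp [hyy, h])] at h0'
    rw [Complex.normSq_eq_conj_mul_self.symm] at h0'
    have hcast : ((1 - a ^ 2) * (∑ j, Complex.normSq (g j))
        + a ^ 2 * Complex.normSq (∑ j, g j) : ℝ) = 0 := by
      exact_mod_cast h0'
    have hT : ∑ j, Complex.normSq (g j) = 0 := by
      have hT0 : 0 ≤ ∑ j, Complex.normSq (g j) :=
        Finset.sum_nonneg fun j _ => Complex.normSq_nonneg _
      have hU0 : 0 ≤ Complex.normSq (∑ j, g j) := Complex.normSq_nonneg _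
      nlinarith
    intro i
    have := (Finset.sum_eq_zero_iff_of_nonneg
      (fun j _ => Complex.normSq_nonneg (g j))).mp hT i (Finset.mem_univ i)
    exact Complex.normSq_eq_zero.mp this
  -- y spans, so z is a combination
  have hcard : Fintype.card (Fin (d ^ 2)) = Module.finrank ℂ (EuclideanSpace ℂ (Fin d × Fin d)) := by
    simp [finrank_euclideanSpace]
    ring
  have hspan := hli.span_eq_top_of_card_eq_finrank hcard
  have hz : zv d ∈ Submodule.span ℂ (Set.range y) := by
    rw [hspan]; exact Submodule.mem_top
  obtain ⟨c, hc⟩ := Submodule.mem_span_range_iff_exists_fun ℂ |>.mp hz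
  set S : ℂ := ∑ j, c j with hSdef
  -- S = d
  have hS : S = (d : ℂ) := by
    have h1 : (inner ℂ (zv d) (zv d) : ℂ) = S := by
      nth_rewrite 2 [← hc]
      rw [inner_sum]
      simp only [inner_smul_right, hy, inner_zv_yv, hxx, mul_one]
      exact hSdef.symm
    rw [← h1, inner_zv_zv]
  -- per-k equation
  have hper : ∀ k, (1 : ℂ) = (a : ℂ) ^ 2 * S + c k * (1 - (a : ℂ) ^ 2) := by
    intro k
    have h1 : (inner ℂ (y k) (zv d) : ℂ) = 1 := by
      simp only [hy]
      rw [inner_yv_zv, hxx]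
    rw [← hc, inner_sum] at h1
    simp only [inner_smul_right, hyy] at h1
    simp only [show ∀ j, c j * (if k = j then (1:ℂ) else (a:ℂ)^2)
        = (a:ℂ)^2 * c j + (if k = j then c j * (1 - (a:ℂ)^2) else 0) from fun j => by
          by_cases h : k = j <;> simp [h] <;> ring] at h1
    rw [Finset.sum_add_distrib, Finset.sum_ite_eq, if_pos (Finset.mem_univ k),
      ← Finset.mul_sum] at h1
    rw [hSdef]
    linear_combination -h1
  -- sum over k
  have hsum : (d : ℂ) ^ 2 * 1 = (d : ℂ) ^ 2 * ((a : ℂ) ^ 2 * (d:ℂ))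
      + (d:ℂ) * (1 - (a : ℂ) ^ 2) := by
    have hsc : ∑ _k : Fin (d ^ 2), (1 : ℂ)
        = ∑ k : Fin (d ^ 2), ((a : ℂ) ^ 2 * S + c k * (1 - (a : ℂ) ^ 2)) :=
      Finset.sum_congr rfl fun k _ => hper k
    simp only [Finset.sum_const, Finset.card_univ, Fintype.card_fin, nsmul_eq_mul,
      Finset.sum_add_distrib, ← Finset.sum_mul, ← hSdef, hS] at hsc
    push_cast at hsc
    linear_combination hsc
  have hfinal : (d : ℝ) ^ 2 = (d:ℝ) ^ 2 * (a ^ 2 * d) + d * (1 - a ^ 2) := by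
    have := hsum
    rw [mul_one] at this
    exact_mod_cast this
  have hdr : (2 : ℝ) ≤ (d : ℝ) := by exact_mod_cast hd
  have ha2 : a ^ 2 = 1 / ((d : ℝ) + 1) := by
    have h2 : (a ^ 2 * ((d:ℝ) + 1) - 1) * ((d:ℝ) ^ 2 - d) = 0 := by
      linear_combination -hfinal
    have h3 : (0:ℝ) < (d:ℝ) ^ 2 - d := by nlinarith
    have h4 : a ^ 2 * ((d:ℝ) + 1) - 1 = 0 := by
      rcases mul_eq_zero.mp h2 with h | h
      · exact h
      · exact absurd h h3.ne'
    field_simp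
    linarith
  rw [← Real.sqrt_sq ha, ha2, one_div, Real.sqrt_inv, one_div]
end

section
/- The maximum number of equiangular lines in ℂ^d is at most d^2: any set of unit vectors in ℂ^d, pairwise linearly independent, with all pairwise inner product magnitudes equal to a common constant a with 0 ≤ a < 1, has size at most d^2. -/
open Finset Complex

/-- The maximum number of equiangular lines in `ℂ^d` is at most `d^2`: any family of
unit vectors in `ℂ^d`, pairwise linearly independent, with all pairwise inner product
magnitudes equal to a common constant `a` with `0 ≤ a < 1`, has size at most `d^2`. -/
theorem stmt_1 (d m : ℕ) (x : Fin m → EuclideanSpace ℂ (Fin d))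
    (hunit : ∀ j, ‖x j‖ = 1)
    (hindep : ∀ j k, j ≠ k → LinearIndependent ℂ ![x j, x k])
    (a : ℝ) (ha0 : 0 ≤ a) (ha1 : a < 1)
    (hang : ∀ j k, j ≠ k → ‖(inner ℂ (x j) (x k) : ℂ)‖ = a) :
    m ≤ d ^ 2 := by
  classical
  set y : Fin m → (Fin d × Fin d → ℂ) :=
    fun j p => (x j p.1) * (starRingEnd ℂ) (x j p.2) with hy
  -- key: value of the "Gram" sums
  have hT : ∀ j k : Fin m, (∑ p : Fin d × Fin d, y j p * (starRingEnd ℂ) (y k p))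
      = ((‖(inner ℂ (x j) (x k) : ℂ)‖ ^ 2 : ℝ) : ℂ) := by
    intro j k
    have h1 : (∑ p : Fin d × Fin d, y j p * (starRingEnd ℂ) (y k p))
        = (∑ i, x j i * (starRingEnd ℂ) (x k i)) * (∑ l, (starRingEnd ℂ) (x j l) * x k l) := by
      rw [Finset.sum_mul_sum, Fintype.sum_prod_type]
      refine Fintype.sum_congr _ _ fun i => Fintype.sum_congr _ _ fun l => ?_
      simp only [hy, map_mul, RingHom.id_apply, Complex.conj_conj]
      ring
    have h2 : (∑ i, x j i * (starRingEnd ℂ) (x k i)) = (starRingEnd ℂ) (inner ℂ (x j) (x k) : ℂ) := by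
      simp [PiLp.inner_apply, RCLike.inner_apply, mul_comm]
    have h3 : (∑ l, (starRingEnd ℂ) (x j l) * x k l) = (inner ℂ (x j) (x k) : ℂ) := by
      simp [PiLp.inner_apply, RCLike.inner_apply, mul_comm]
    rw [h1, h2, h3, Complex.conj_mul']
    simp [Complex.normSq_eq_norm_sq]
  have hTdiag : ∀ j : Fin m, (∑ p : Fin d × Fin d, y j p * (starRingEnd ℂ) (y j p)) = 1 := by
    intro j
    rw [hT j j, inner_self_eq_norm_sq_to_K]
    push_cast
    rw [hunit j]
    norm_num
  have hToff : ∀ j k : Fin m, j ≠ k →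
      (∑ p : Fin d × Fin d, y j p * (starRingEnd ℂ) (y k p)) = ((a ^ 2 : ℝ) : ℂ) := by
    intro j k hjk
    rw [hT j k, hang j k hjk]
  have hli : LinearIndependent ℂ y := by
    rw [Fintype.linearIndependent_iff]
    intro c hc
    -- Gram equations
    have hG : ∀ k : Fin m, (1 - ((a^2:ℝ):ℂ)) * c k + ((a^2:ℝ):ℂ) * (∑ j, c j) = 0 := by
      intro k
      have h0 : (∑ j, c j * ∑ p : Fin d × Fin d, y j p * (starRingEnd ℂ) (y k p)) = 0 := by
        have : (∑ p : Fin d × Fin d, (∑ j, c j * y j p) * (starRingEnd ℂ) (y k p)) = 0 := by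
          refine Finset.sum_eq_zero fun p _ => ?_
          have := congrFun hc p
          simp only [Finset.sum_apply, Pi.smul_apply, smul_eq_mul, Pi.zero_apply] at this
          rw [this, zero_mul]
        rw [← this]
        simp_rw [Finset.sum_mul, Finset.mul_sum]
        rw [Finset.sum_comm]
        exact Fintype.sum_congr _ _ fun p => Fintype.sum_congr _ _ fun j => by ring
      rw [Fintype.sum_eq_add_sum_compl k] at h0
      rw [hTdiag k, mul_one] at h0
      rw [Finset.sum_congr rfl (fun j hj => by
        rw [hToff j k (by simpa using (Finset.mem_compl.mp hj))])] at h0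
      rw [← Finset.sum_mul] at h0
      have hsum : (∑ j ∈ {k}ᶜ, c j) = (∑ j, c j) - c k := by
        rw [Fintype.sum_eq_add_sum_compl k (fun j => c j)]; ring
      rw [hsum] at h0
      rw [← h0]; ring
    have hS : (∑ j, c j) = 0 := by
      have hsumG : (∑ k, ((1 - ((a^2:ℝ):ℂ)) * c k + ((a^2:ℝ):ℂ) * (∑ j, c j))) = 0 :=
        Finset.sum_eq_zero fun k _ => hG k
      have : ((1 - a^2 + m * a^2 : ℝ) : ℂ) * (∑ j, c j) = 0 := by
        rw [← hsumG, Finset.sum_add_distrib, ← Finset.mul_sum, Finset.sum_const,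
          Finset.card_univ, Fintype.card_fin, nsmul_eq_mul]
        push_cast
        ring
      have hne : ((1 - a^2 + m * a^2 : ℝ) : ℂ) ≠ 0 := by
        rw [Ne, Complex.ofReal_eq_zero]
        have h1 : (0:ℝ) ≤ m * a^2 := by positivity
        nlinarith [sq_nonneg a]
      exact (mul_eq_zero.mp this).resolve_left hne
    intro k
    have := hG k
    rw [hS, mul_zero, add_zero, mul_eq_zero] at this
    rcases this with h | h
    · exfalso
      rw [sub_eq_zero] at h
      have : (a^2:ℝ) = 1 := by exact_mod_cast h.symm
      nlinarith
    · exact h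
  have hcard := hli.fintype_card_le_finrank
  simpa [Module.finrank_fintype_fun_eq_card, sq] using hcard
end

section
/- A set of mutually unbiased bases in ℂ^d has size at most d+1. -/
open Matrix Finset

namespace MUB

noncomputable def proj {d : ℕ} (x : EuclideanSpace ℂ (Fin d)) : Matrix (Fin d) (Fin d) ℂ :=
  Matrix.of fun a b => x a * (starRingEnd ℂ) (x b)

lemma trace_proj {d : ℕ} (x : EuclideanSpace ℂ (Fin d)) :
    (proj x).trace = (starRingEnd ℂ) (inner ℂ x x : ℂ) := by
  simp only [proj, Matrix.trace, Matrix.diag, Matrix.of_apply, PiLp.inner_apply,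
    RCLike.inner_apply, map_sum, _root_.map_mul, Complex.conj_conj]
  exact Finset.sum_congr rfl fun _ _ => mul_comm _ _

lemma trace_proj_mul {d : ℕ} (x y : EuclideanSpace ℂ (Fin d)) :
    (proj x * proj y).trace = (starRingEnd ℂ) (inner ℂ x y : ℂ) * (inner ℂ x y : ℂ) := by
  simp only [Matrix.trace, Matrix.diag, Matrix.mul_apply, proj, Matrix.of_apply,
    PiLp.inner_apply, RCLike.inner_apply, map_sum, _root_.map_mul, Complex.conj_conj]
  rw [Finset.sum_mul]
  refine Finset.sum_congr rfl fun a _ => ?_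
  rw [Finset.mul_sum]
  refine Finset.sum_congr rfl fun b _ => ?_
  ring

end MUB

/-- A set of mutually unbiased bases in `ℂ^d` has size at most `d+1`:
if `B i` (for `i : Fin n`) are orthonormal bases of `ℂ^d` such that every pair of
distinct bases is unbiased (all inner products between their elements have
magnitude `1/√d`), then `n ≤ d + 1`. -/
theorem stmt_2 (d n : ℕ) (hd : 2 ≤ d)
    (B : Fin n → Fin d → EuclideanSpace ℂ (Fin d))
    (horth : ∀ i, Orthonormal ℂ (B i))
    (hub : ∀ i i', i ≠ i' → ∀ j k,
      ‖(inner ℂ (B i j) (B i' k) : ℂ)‖ = 1 / Real.sqrt d) :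
    n ≤ d + 1 := by
  classical
  have hd0 : (d : ℂ) ≠ 0 := Nat.cast_ne_zero.mpr (by omega)
  set c : ℂ := (d : ℂ)⁻¹ with hc
  set P : Fin n → Fin d → Matrix (Fin d) (Fin d) ℂ := fun i j => MUB.proj (B i j) with hP
  set u : Fin n → Fin (d - 1) → Matrix (Fin d) (Fin d) ℂ :=
    fun i j => P i (Fin.castLE (Nat.sub_le d 1) j) - c • 1 with hu
  -- basic trace values
  have hP1 : ∀ i j, (P i j).trace = 1 := by
    intro i j
    rw [hP, MUB.trace_proj, orthonormal_iff_ite.mp (horth i) j j]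
    simp
  have hone : (1 : Matrix (Fin d) (Fin d) ℂ).trace = (d : ℂ) := by
    simp [Matrix.trace_one]
  have hsame : ∀ i j k, (P i j * P i k).trace = if j = k then 1 else 0 := by
    intro i j k
    rw [hP, MUB.trace_proj_mul, orthonormal_iff_ite.mp (horth i) j k]
    split <;> simp
  have hdiff : ∀ i i', i ≠ i' → ∀ j k, (P i j * P i' k).trace = c := by
    intro i i' h j k
    have hdR : (0:ℝ) < d := by positivity
    rw [hP, MUB.trace_proj_mul]
    have hnorm : (starRingEnd ℂ) (inner ℂ (B i j) (B i' k) : ℂ) * (inner ℂ (B i j) (B i' k) : ℂ)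
        = ((‖(inner ℂ (B i j) (B i' k) : ℂ)‖ ^ 2 : ℝ) : ℂ) := by
      rw [mul_comm, Complex.mul_conj']
      push_cast
      ring
    rw [hnorm, hub i i' h j k, hc]
    have : ((1 / Real.sqrt d) ^ 2 : ℝ) = (d : ℝ)⁻¹ := by
      rw [div_pow, one_pow, Real.sq_sqrt hdR.le, one_div]
    rw [this]
    push_cast
    ring
  have htru : ∀ i j, (u i j).trace = 0 := by
    intro i j
    rw [hu]
    simp only [Matrix.trace_sub, Matrix.trace_smul, hP1, hone, smul_eq_mul]
    rw [hc]
    field_simp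
    ring
  have huu : ∀ i k i' j, (u i k * u i' j).trace =
      if i = i' then ((if k = j then (1:ℂ) else 0) - c) else 0 := by
    intro i k i' j
    have expand : (u i k * u i' j).trace =
        (P i (Fin.castLE (Nat.sub_le d 1) k) * P i' (Fin.castLE (Nat.sub_le d 1) j)).trace - c := by
      rw [hu]
      simp only [sub_mul, mul_sub, Matrix.smul_mul, Matrix.mul_smul, one_mul, mul_one,
        Matrix.trace_sub, Matrix.trace_smul, hP1, hone, smul_eq_mul, smul_smul]
      rw [hc]
      field_simp
      ring
    rw [expand]
    by_cases hii : i = i'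
    · subst hii
      rw [hsame, if_pos rfl]
      by_cases hkj : k = j
      · subst hkj
        rw [if_pos rfl, if_pos rfl]
      · rw [if_neg (fun h => hkj (Fin.castLE_inj.mp h)), if_neg hkj]
    · rw [hdiff i i' hii, if_neg hii, sub_self]
  -- the linearly independent family
  set f : (Fin n × Fin (d - 1)) ⊕ Unit → Matrix (Fin d) (Fin d) ℂ :=
    Sum.elim (fun p => u p.1 p.2) (fun _ => 1) with hf
  have hli : LinearIndependent ℂ f := by
    rw [Fintype.linearIndependent_iff]
    intro g hg
    set T : Matrix (Fin d) (Fin d) ℂ → (Matrix (Fin d) (Fin d) ℂ →ₗ[ℂ] ℂ) :=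
      fun A => (Matrix.traceLinearMap (Fin d) ℂ ℂ).comp (LinearMap.mulLeft ℂ A) with hT
    have hTval : ∀ A M : Matrix (Fin d) (Fin d) ℂ, T A M = (A * M).trace := fun A M => rfl
    have hTsum : ∀ A : Matrix (Fin d) (Fin d) ℂ, (∑ v, g v * (A * f v).trace) = 0 := by
      intro A
      have h1 := congrArg (T A) hg
      rw [map_sum, map_zero] at h1
      rw [← h1]
      refine Finset.sum_congr rfl fun v _ => ?_
      rw [LinearMap.map_smul, hTval, smul_eq_mul]
    set a : Fin n → Fin (d - 1) → ℂ := fun i j => g (Sum.inl (i, j)) with ha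
    -- pairing with 1 kills the identity coefficient
    have hginr : ∀ z : Unit, g (Sum.inr z) = 0 := by
      rintro ⟨⟩
      have h1 := hTsum 1
      rw [Fintype.sum_sum_type] at h1
      simp only [hf, Sum.elim_inl, Sum.elim_inr, one_mul, htru, mul_zero,
        Finset.sum_const_zero, hone, zero_add, Finset.sum_const, Finset.card_univ,
        Fintype.card_unit, one_smul, Finset.univ_unique, Finset.sum_singleton] at h1
      exact (mul_eq_zero.mp h1).resolve_right hd0
    set S : Fin n → ℂ := fun i => ∑ j, a i j with hS
    have key : ∀ i' k', a i' k' = c * S i' := by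
      intro i' k'
      have hsum_i : ∀ i : Fin n, (∑ j, g (Sum.inl (i, j)) * (u i' k' * u i j).trace)
          = if i' = i then a i' k' - c * S i' else 0 := by
        intro i
        by_cases hii : i' = i
        · subst hii
          rw [if_pos rfl]
          have hterm : ∀ j, g (Sum.inl (i', j)) * (u i' k' * u i' j).trace
              = (if k' = j then a i' j else 0) - a i' j * c := by
            intro j
            rw [huu, if_pos rfl, mul_sub, mul_ite, mul_one, mul_zero]
          rw [Finset.sum_congr rfl fun j _ => hterm j, Finset.sum_sub_distrib,
            Finset.sum_ite_eq Finset.univ k' (a i'), if_pos (Finset.mem_univ k'),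
            ← Finset.sum_mul]
          rw [hS]
          ring
        · rw [if_neg hii]
          refine Finset.sum_eq_zero fun j _ => ?_
          rw [huu, if_neg hii, mul_zero]
      have h1 := hTsum (u i' k')
      rw [Fintype.sum_sum_type, Fintype.sum_prod_type] at h1
      simp only [hf, Sum.elim_inl, Sum.elim_inr, mul_one, htru, mul_zero,
        Finset.sum_const_zero, add_zero] at h1
      rw [Finset.sum_congr rfl fun i _ => hsum_i i,
        Finset.sum_ite_eq Finset.univ i' _, if_pos (Finset.mem_univ i')] at h1
      exact sub_eq_zero.mp h1
    have hSzero : ∀ i', S i' = 0 := by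
      intro i'
      have h1 : S i' = ((d - 1 : ℕ) : ℂ) * (c * S i') := by
        have : (∑ j : Fin (d - 1), a i' j) = ((d - 1 : ℕ) : ℂ) * (c * S i') := by
          rw [Finset.sum_congr rfl fun j _ => key i' j, Finset.sum_const, Finset.card_univ,
            Fintype.card_fin, nsmul_eq_mul]
        exact this
      have hcast : ((d - 1 : ℕ) : ℂ) = (d : ℂ) - 1 := by
        have h1d : (1:ℕ) ≤ d := by omega
        push_cast [Nat.cast_sub h1d]
        ring
      rw [hcast] at h1
      have h2 : S i' * (1 - ((d:ℂ) - 1) * c) = 0 := by linear_combination h1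
      have h3 : (1 - ((d:ℂ) - 1) * c) = c := by
        rw [hc]
        field_simp
        ring
      rw [h3] at h2
      refine (mul_eq_zero.mp h2).resolve_right ?_
      rw [hc]
      exact inv_ne_zero hd0
    intro v
    match v with
    | Sum.inl (i, j) =>
        have hk := key i j
        rw [hSzero i, mul_zero] at hk
        exact hk
    | Sum.inr z => exact hginr z
  -- count dimensions
  have hcard := hli.fintype_card_le_finrank
  rw [Module.finrank_matrix] at hcard
  simp only [Fintype.card_sum, Fintype.card_prod, Fintype.card_fin, Fintype.card_unit,
    Module.finrank_self, mul_one] at hcard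
  obtain ⟨e, rfl⟩ : ∃ e, d = e + 2 := ⟨d - 2, by omega⟩
  have he : e + 2 - 1 = e + 1 := by omega
  rw [he] at hcard
  have h2 : n * (e + 1) ≤ (e + 3) * (e + 1) := by nlinarith
  have h3 := Nat.le_of_mul_le_mul_right h2 (by omega : 0 < e + 1)
  omega
end

section
/- Let d ≥ 2, let R be a (d,d,d,1)-RDS in an abelian group giving MUB vectors with unit-modulus entries, let π ∈ S_d, and let a,b ∈ ℝ. In the set of d² vectors in ℂ^{2d} formed by concatenating corresponding vectors of L(π, a+ib) and L(π, 2-a-ib), every inner product between distinct vectors has magnitude 2(b² + (a-1)²) (when the two vectors come from the same basis block) or 2√d (when they come from different basis blocks). -/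
open Complex

/-- The vector of the `j`-th basis block indexed by `m`, with entry `π j`
multiplied by `v`. -/
def modVec {d : ℕ} (B : Fin d → Fin d → Fin d → ℂ) (π : Equiv.Perm (Fin d))
    (v : ℂ) (j m : Fin d) : Fin d → ℂ :=
  fun ℓ => if ℓ = π j then v * B j m ℓ else B j m ℓ

/-- The concatenation in `ℂ^{2d}` of the vector of `L(π,v)` and the corresponding
vector of `L(π,v')`. -/
def concVec {d : ℕ} (B : Fin d → Fin d → Fin d → ℂ) (π : Equiv.Perm (Fin d))
    (v v' : ℂ) (j m : Fin d) : Fin d ⊕ Fin d → ℂ :=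
  Sum.elim (modVec B π v j m) (modVec B π v' j m)

/-- Let `d ≥ 2` and let `B j` (`j = 1,…,d`) be the `d` MUBs in `ℂ^d` built from a
`(d,d,d,1)`-RDS: all entries have modulus 1, distinct vectors of the same basis are
orthogonal, and vectors of distinct bases have inner products of magnitude `√d`.
Let `π ∈ S_d` and `a, b ∈ ℝ`.  Among the `d²` concatenated vectors
`[L(π, a+ib) | L(π, 2-a-ib)]` in `ℂ^{2d}`, the inner product of two distinct vectors
has magnitude `2(b² + (a-1)²)` if they come from the same basis block, and `2√d` if
they come from different basis blocks. -/
theorem stmt_14 (d : ℕ) (hd : 2 ≤ d) (B : Fin d → Fin d → Fin d → ℂ)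
    (hmod : ∀ j m ℓ, ‖B j m ℓ‖ = 1)
    (horth : ∀ j m m', m ≠ m' →
      ∑ ℓ, B j m ℓ * (starRingEnd ℂ) (B j m' ℓ) = 0)
    (hub : ∀ j j', j ≠ j' → ∀ m m',
      ‖∑ ℓ, B j m ℓ * (starRingEnd ℂ) (B j' m' ℓ)‖ = Real.sqrt d)
    (π : Equiv.Perm (Fin d)) (a b : ℝ) :
    ∀ j m j' m', (j, m) ≠ (j', m') →
      ‖(∑ ℓ, concVec B π ((a : ℂ) + b * I) (2 - a - b * I) j m ℓ *
          (starRingEnd ℂ) (concVec B π ((a : ℂ) + b * I) (2 - a - b * I) j' m' ℓ))‖ =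
        if j = j' then 2 * (b ^ 2 + (a - 1) ^ 2) else 2 * Real.sqrt d := by
  intro j m j' m' hne
  set v : ℂ := (a : ℂ) + b * I with hv
  set w : ℂ := 2 - (a : ℂ) - b * I with hw
  have hsplit :
      (∑ ℓ, concVec B π v w j m ℓ * (starRingEnd ℂ) (concVec B π v w j' m' ℓ))
      = (∑ ℓ, modVec B π v j m ℓ * (starRingEnd ℂ) (modVec B π v j' m' ℓ))
      + (∑ ℓ, modVec B π w j m ℓ * (starRingEnd ℂ) (modVec B π w j' m' ℓ)) := by
    rw [Fintype.sum_sum_type]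
    rfl
  have hcabs : ∀ ℓ, ‖B j m ℓ * (starRingEnd ℂ) (B j' m' ℓ)‖ = 1 := by
    intro ℓ; simp [map_mul, hmod]
  by_cases hjj : j = j'
  · subst hjj
    have hmm : m ≠ m' := fun h => hne (by simp [h])
    have key : ∀ u : ℂ,
        (∑ ℓ, modVec B π u j m ℓ * (starRingEnd ℂ) (modVec B π u j m' ℓ))
        = (u * (starRingEnd ℂ) u - 1) * (B j m (π j) * (starRingEnd ℂ) (B j m' (π j))) := by
      intro u
      have hterm : ∀ ℓ, modVec B π u j m ℓ * (starRingEnd ℂ) (modVec B π u j m' ℓ)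
          = B j m ℓ * (starRingEnd ℂ) (B j m' ℓ)
            + (if ℓ = π j then (u * (starRingEnd ℂ) u - 1)
                * (B j m ℓ * (starRingEnd ℂ) (B j m' ℓ)) else 0) := by
        intro ℓ
        simp only [modVec]
        split_ifs with h1
        · simp only [map_mul]; ring
        · ring
      rw [Finset.sum_congr rfl (fun ℓ _ => hterm ℓ), Finset.sum_add_distrib,
        horth j m m' hmm, Finset.sum_ite_eq' Finset.univ (π j)]
      simp
    rw [hsplit, key v, key w, ← add_mul, if_pos rfl, norm_mul]
    have hval : (v * (starRingEnd ℂ) v - 1) + (w * (starRingEnd ℂ) w - 1)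
        = ((2 * (b ^ 2 + (a - 1) ^ 2) : ℝ) : ℂ) := by
      have h1 : (starRingEnd ℂ) v = (a : ℂ) - b * I := by
        simp only [hv, map_add, map_mul, Complex.conj_ofReal, Complex.conj_I]; ring
      have h2 : (starRingEnd ℂ) w = 2 - (a : ℂ) + b * I := by
        simp only [hw, map_sub, map_mul, Complex.conj_ofReal, Complex.conj_I, map_ofNat]; ring
      rw [h1, h2, hv, hw]
      push_cast
      linear_combination (-2 * (b:ℂ)^2) * Complex.I_sq
    rw [hval, hcabs, mul_one, Complex.norm_real, Real.norm_eq_abs, _root_.abs_of_nonneg (by positivity)]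
  · have hpne : π j ≠ π j' := fun h => hjj (π.injective h)
    have key : ∀ u : ℂ,
        (∑ ℓ, modVec B π u j m ℓ * (starRingEnd ℂ) (modVec B π u j' m' ℓ))
        = (∑ ℓ, B j m ℓ * (starRingEnd ℂ) (B j' m' ℓ))
          + (u - 1) * (B j m (π j) * (starRingEnd ℂ) (B j' m' (π j)))
          + ((starRingEnd ℂ) u - 1) * (B j m (π j') * (starRingEnd ℂ) (B j' m' (π j'))) := by
      intro u
      have hterm : ∀ ℓ, modVec B π u j m ℓ * (starRingEnd ℂ) (modVec B π u j' m' ℓ)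
          = B j m ℓ * (starRingEnd ℂ) (B j' m' ℓ)
            + (if ℓ = π j then (u - 1) * (B j m ℓ * (starRingEnd ℂ) (B j' m' ℓ)) else 0)
            + (if ℓ = π j' then ((starRingEnd ℂ) u - 1)
                * (B j m ℓ * (starRingEnd ℂ) (B j' m' ℓ)) else 0) := by
        intro ℓ
        simp only [modVec]
        split_ifs with h1 h2
        · exact absurd (h1 ▸ h2) hpne
        · ring
        · simp only [map_mul]; ring
        · ring
      rw [Finset.sum_congr rfl (fun ℓ _ => hterm ℓ), Finset.sum_add_distrib,
        Finset.sum_add_distrib, Finset.sum_ite_eq' Finset.univ (π j),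
        Finset.sum_ite_eq' Finset.univ (π j')]
      simp
    have hvw : v + w = 2 := by rw [hv, hw]; ring
    have hcvw : (starRingEnd ℂ) v + (starRingEnd ℂ) w = 2 := by
      rw [← map_add, hvw, map_ofNat]
    rw [hsplit, key v, key w]
    have : ((∑ ℓ, B j m ℓ * (starRingEnd ℂ) (B j' m' ℓ))
          + (v - 1) * (B j m (π j) * (starRingEnd ℂ) (B j' m' (π j)))
          + ((starRingEnd ℂ) v - 1) * (B j m (π j') * (starRingEnd ℂ) (B j' m' (π j'))))
        + ((∑ ℓ, B j m ℓ * (starRingEnd ℂ) (B j' m' ℓ))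
          + (w - 1) * (B j m (π j) * (starRingEnd ℂ) (B j' m' (π j)))
          + ((starRingEnd ℂ) w - 1) * (B j m (π j') * (starRingEnd ℂ) (B j' m' (π j'))))
        = 2 * (∑ ℓ, B j m ℓ * (starRingEnd ℂ) (B j' m' ℓ)) := by
      linear_combination (B j m (π j) * (starRingEnd ℂ) (B j' m' (π j))) * hvw
        + (B j m (π j') * (starRingEnd ℂ) (B j' m' (π j'))) * hcvw
    rw [this, if_neg hjj, norm_mul, hub j j' hjj m m', Complex.norm_two]
end

section
/- For every integer d ≥ 2 there exist real a, b with 2(b² + (a-1)²) = 2√d; hence (given a (d,d,d,1)-RDS construction of d MUBs in ℂ^d and any π ∈ S_d) the d² concatenated vectors [L(π,a+ib) | L(π,2-a-ib)] in ℂ^{2d} form a set of d² equiangular lines, with all pairwise inner products of distinct vectors having magnitude 2√d. -/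
open Complex

lemma blockSum {d : ℕ} (B : Fin d → Fin d → Fin d → ℂ) (π : Equiv.Perm (Fin d))
    (v : ℝ) (j m j' m' : Fin d) :
    ∑ ℓ, modVec B π (v:ℂ) j m ℓ * (starRingEnd ℂ) (modVec B π (v:ℂ) j' m' ℓ)
    = (∑ ℓ, B j m ℓ * (starRingEnd ℂ) (B j' m' ℓ))
      + ((v:ℂ)-1) * (B j m (π j) * (starRingEnd ℂ) (B j' m' (π j)))
      + ((v:ℂ)-1) * (B j m (π j') * (starRingEnd ℂ) (B j' m' (π j')))
      + (if π j = π j' then ((v:ℂ)-1)^2 * (B j m (π j) * (starRingEnd ℂ) (B j' m' (π j))) else 0) := by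
  have key : ∀ ℓ : Fin d, modVec B π (v:ℂ) j m ℓ * (starRingEnd ℂ) (modVec B π (v:ℂ) j' m' ℓ)
      = B j m ℓ * (starRingEnd ℂ) (B j' m' ℓ)
        + ((if ℓ = π j then ((v:ℂ)-1) * (B j m ℓ * (starRingEnd ℂ) (B j' m' ℓ)) else 0)
        + ((if ℓ = π j' then ((v:ℂ)-1) * (B j m ℓ * (starRingEnd ℂ) (B j' m' ℓ)) else 0)
        + (if ℓ = π j then (if ℓ = π j' then ((v:ℂ)-1)^2 * (B j m ℓ * (starRingEnd ℂ) (B j' m' ℓ)) else 0) else 0))) := by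
    intro ℓ
    simp only [modVec]
    split_ifs <;> simp [map_mul, Complex.conj_ofReal] <;> ring
  rw [Finset.sum_congr rfl (fun ℓ _ => key ℓ)]
  rw [Finset.sum_add_distrib, Finset.sum_add_distrib, Finset.sum_add_distrib]
  simp only [Finset.sum_ite_eq', Finset.mem_univ, if_true]
  ring

/-- For every `d ≥ 2` there exist reals `a, b` with `2(b² + (a-1)²) = 2√d`, and
then (for `d` MUBs in `ℂ^d` built from a `(d,d,d,1)`-RDS and any `π ∈ S_d`) the
`d²` concatenated vectors `[L(π, a+ib) | L(π, 2-a-ib)]` in `ℂ^{2d}` form `d²`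
equiangular lines: every inner product between distinct vectors has
magnitude `2√d`. -/
theorem stmt_15 (d : ℕ) (hd : 2 ≤ d) (B : Fin d → Fin d → Fin d → ℂ)
    (hmod : ∀ j m ℓ, ‖B j m ℓ‖ = 1)
    (horth : ∀ j m m', m ≠ m' →
      ∑ ℓ, B j m ℓ * (starRingEnd ℂ) (B j m' ℓ) = 0)
    (hub : ∀ j j', j ≠ j' → ∀ m m',
      ‖∑ ℓ, B j m ℓ * (starRingEnd ℂ) (B j' m' ℓ)‖ = Real.sqrt d)
    (π : Equiv.Perm (Fin d)) :
    ∃ a b : ℝ, 2 * (b ^ 2 + (a - 1) ^ 2) = 2 * Real.sqrt d ∧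
      ∀ j m j' m', (j, m) ≠ (j', m') →
        ‖∑ ℓ, concVec B π ((a : ℂ) + b * I) (2 - a - b * I) j m ℓ *
            (starRingEnd ℂ)
              (concVec B π ((a : ℂ) + b * I) (2 - a - b * I) j' m' ℓ)‖ =
          2 * Real.sqrt d := by
  set t : ℝ := Real.sqrt (Real.sqrt d) with ht
  have hs0 : (0:ℝ) ≤ Real.sqrt d := Real.sqrt_nonneg _
  have ht2 : t ^ 2 = Real.sqrt d := Real.sq_sqrt hs0
  have ht0 : 0 ≤ t := Real.sqrt_nonneg _
  refine ⟨1 + t, 0, by rw [← ht2]; ring, ?_⟩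
  intro j m j' m' hne
  have e1 : ((((1:ℝ) + t : ℝ)):ℂ) + ((0:ℝ):ℂ) * I = (((1 + t : ℝ)):ℂ) := by
    push_cast; ring
  have e2 : 2 - ((((1:ℝ) + t : ℝ)):ℂ) - ((0:ℝ):ℂ) * I = (((1 - t : ℝ)):ℂ) := by
    push_cast; ring
  rw [e1, e2]
  have esum : (∑ ℓ, concVec B π (((1 + t : ℝ)):ℂ) (((1 - t : ℝ)):ℂ) j m ℓ *
        (starRingEnd ℂ) (concVec B π (((1 + t : ℝ)):ℂ) (((1 - t : ℝ)):ℂ) j' m' ℓ))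
      = (∑ ℓ, modVec B π (((1 + t : ℝ)):ℂ) j m ℓ * (starRingEnd ℂ) (modVec B π (((1 + t : ℝ)):ℂ) j' m' ℓ))
      + (∑ ℓ, modVec B π (((1 - t : ℝ)):ℂ) j m ℓ * (starRingEnd ℂ) (modVec B π (((1 - t : ℝ)):ℂ) j' m' ℓ)) := by
    rw [Fintype.sum_sum_type]; rfl
  rw [esum, blockSum, blockSum]
  have c1 : (((1 + t : ℝ)):ℂ) - 1 = (t:ℂ) := by push_cast; ring
  have c2 : (((1 - t : ℝ)):ℂ) - 1 = -(t:ℂ) := by push_cast; ring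
  rw [c1, c2]
  by_cases hj : j = j'
  · subst hj
    have hm : m ≠ m' := fun h => hne (by rw [h])
    rw [horth j m m' hm]
    rw [if_pos (rfl : π j = π j), if_pos (rfl : π j = π j)]
    have : (0 + (t:ℂ) * (B j m (π j) * (starRingEnd ℂ) (B j m' (π j)))
        + (t:ℂ) * (B j m (π j) * (starRingEnd ℂ) (B j m' (π j)))
        + (t:ℂ)^2 * (B j m (π j) * (starRingEnd ℂ) (B j m' (π j)))
        + (0 + (-(t:ℂ)) * (B j m (π j) * (starRingEnd ℂ) (B j m' (π j)))
        + (-(t:ℂ)) * (B j m (π j) * (starRingEnd ℂ) (B j m' (π j)))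
        + (-(t:ℂ))^2 * (B j m (π j) * (starRingEnd ℂ) (B j m' (π j)))))
        = (2 * (t:ℂ)^2) * (B j m (π j) * (starRingEnd ℂ) (B j m' (π j))) := by ring
    rw [this]
    simp only [norm_mul, norm_pow, Complex.norm_conj, hmod, Complex.norm_two, Complex.norm_real, Real.norm_eq_abs]
    rw [_root_.abs_of_nonneg ht0, mul_one, mul_one, ht2]
  · have hπ : π j ≠ π j' := fun h => hj (π.injective h)
    rw [if_neg hπ, if_neg hπ]
    set S := ∑ ℓ, B j m ℓ * (starRingEnd ℂ) (B j' m' ℓ) with hS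
    have : (S + (t:ℂ) * (B j m (π j) * (starRingEnd ℂ) (B j' m' (π j)))
        + (t:ℂ) * (B j m (π j') * (starRingEnd ℂ) (B j' m' (π j'))) + 0
        + (S + (-(t:ℂ)) * (B j m (π j) * (starRingEnd ℂ) (B j' m' (π j)))
        + (-(t:ℂ)) * (B j m (π j') * (starRingEnd ℂ) (B j' m' (π j'))) + 0))
        = 2 * S := by ring
    rw [this, norm_mul, hS, hub j j' hj m m', Complex.norm_two]
end

section
/- Let x, y be vectors in ℂ^d with all entries roots of unity and |⟨x,y⟩| = √d, let π(j) ≠ π(k) be two coordinate positions, and let x(v), y(v) be obtained from x, y by multiplying entry π(j) of x by v and entry π(k) of y by v. Then for v = a+ib and v' = 2-a-ib, the concatenated vectors (x(v)|x(v')) and (y(v)|y(v')) in ℂ^{2d} satisfy ⟨(x(v)|x(v')), (y(v)|y(v'))⟩ = 2⟨x,y⟩, which has magnitude 2√d. -/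
open Complex

/-- Let `x, y ∈ ℂ^d` have all entries roots of unity with `|⟨x,y⟩| = √d`, let
`p ≠ q` be coordinate positions, and let `x(v)` (resp. `y(v)`) be obtained from `x`
(resp. `y`) by multiplying entry `p` of `x` (resp. entry `q` of `y`) by `v`.  Then
for `v = a+ib` and `v' = 2-a-ib`, the concatenated vectors `(x(v)|x(v'))` and
`(y(v)|y(v'))` in `ℂ^{2d}` satisfy
`⟨(x(v)|x(v')), (y(v)|y(v'))⟩ = 2⟨x,y⟩`, which has magnitude `2√d`. -/
theorem stmt_19 (d : ℕ) (hd : 1 ≤ d) (x y : Fin d → ℂ)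
    (hx : ∀ ℓ, ∃ n : ℕ, 0 < n ∧ x ℓ ^ n = 1)
    (hy : ∀ ℓ, ∃ n : ℕ, 0 < n ∧ y ℓ ^ n = 1)
    (hxy : ‖∑ ℓ, x ℓ * (starRingEnd ℂ) (y ℓ)‖ = Real.sqrt d)
    (p q : Fin d) (hpq : p ≠ q) (a b : ℝ) (v v' : ℂ)
    (hv : v = (a : ℂ) + b * I) (hv' : v' = 2 - a - b * I) :
    (∑ ℓ : Fin d ⊕ Fin d,
        Sum.elim (fun ℓ => if ℓ = p then v * x ℓ else x ℓ)
                 (fun ℓ => if ℓ = p then v' * x ℓ else x ℓ) ℓ *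
        (starRingEnd ℂ)
          (Sum.elim (fun ℓ => if ℓ = q then v * y ℓ else y ℓ)
                    (fun ℓ => if ℓ = q then v' * y ℓ else y ℓ) ℓ)) =
      2 * ∑ ℓ, x ℓ * (starRingEnd ℂ) (y ℓ) ∧
    ‖2 * ∑ ℓ, x ℓ * (starRingEnd ℂ) (y ℓ)‖ = 2 * Real.sqrt d := by
  constructor
  · rw [Fintype.sum_sum_type]
    simp only [Sum.elim_inl, Sum.elim_inr]
    rw [← Finset.sum_add_distrib, Finset.mul_sum]
    apply Finset.sum_congr rfl
    intro ℓ _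
    by_cases hp : ℓ = p <;> by_cases hq : ℓ = q <;>
      simp [hp, hq, hv, hv', hpq, Ne.symm hpq, Complex.I_sq, map_ofNat, map_mul, map_sub, map_add, Complex.conj_ofReal,
        Complex.conj_I] <;> ring
  · rw [norm_mul, hxy]
    simp
end
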